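/- An R-module E is finitely generated projective if and only if for every commutative R-algebra B, the canonical map Hom_R(E, R) ⊗_R B → Hom_R(E, B) is bijective. -/

import Mathlib

open TensorProduct

/-- An `R`-module `E` is finitely generated projective if and only if for every commutative
`R`-algebra `B` the canonical map `Hom_R(E,R) ⊗_R B → Hom_R(E,B)`, `w ⊗ b ↦ (e ↦ w e • b)`,
is bijective. -/
theorem stmt4 {R : Type u} [CommRing R] (E : Type u) [AddCommGroup E] [Module R E] :
    (Module.Finite R E ∧ Module.Projective R E) ↔
      ∀ (B : Type u) [CommRing B] [Algebra R B],
        Function.Bijective (dualTensorHom R E B) := by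
  constructor
  · rintro ⟨hfin, hproj⟩ B _ _
    obtain ⟨n, f, g, hfs, hgi, hfg⟩ := Module.Finite.exists_comp_eq_id_of_projective R E
    set F := (Fin n → R) with hF
    let b : Module.Basis (Fin n) R F := Pi.basisFun R (Fin n)
    let v : Module.Dual R F ⊗[R] B ≃ₗ[R] (F →ₗ[R] B) := dualTensorHomEquivOfBasis b
    have hv : ∀ x, v x = dualTensorHom R F B x := fun x =>
      dualTensorHomEquivOfBasis_apply b x
    let i : Module.Dual R E ⊗[R] B →ₗ[R] Module.Dual R F ⊗[R] B :=
      LinearMap.rTensor B f.dualMap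
    let r : Module.Dual R F ⊗[R] B →ₗ[R] Module.Dual R E ⊗[R] B :=
      LinearMap.rTensor B g.dualMap
    have hri : ∀ x, r (i x) = x := by
      intro x
      have h : r ∘ₗ i = LinearMap.id := by
        dsimp only [r, i]
        rw [← LinearMap.rTensor_comp, LinearMap.dualMap_comp_dualMap, hfg,
          LinearMap.dualMap_id, LinearMap.rTensor_id]
      calc r (i x) = (r ∘ₗ i) x := rfl
        _ = x := by rw [h]; rfl
    have hnat1 : ∀ x, v (i x) = (dualTensorHom R E B x) ∘ₗ f := by
      intro x
      rw [hv]
      induction x using TensorProduct.induction_on with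
      | zero => simp
      | tmul w bb =>
        ext e
        simp [i, dualTensorHom_apply]
        erw [dualTensorHom_apply]; rfl
      | add x y hx hy =>
        simp only [map_add, hx, hy, LinearMap.add_comp]
    have hnat2 : ∀ y, dualTensorHom R E B (r y) = (v y) ∘ₗ g := by
      intro y
      rw [hv]
      induction y using TensorProduct.induction_on with
      | zero => simp
      | tmul w bb =>
        ext e
        simp [r, dualTensorHom_apply]
      | add x y hx hy =>
        simp only [map_add, hx, hy, LinearMap.add_comp]
    constructor
    · intro x y hxy
      have h1 : v (i x) = v (i y) := by rw [hnat1, hnat1, hxy]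
      have h2 : i x = i y := v.injective h1
      rw [← hri x, ← hri y, h2]
    · intro φ
      refine ⟨r (v.symm (φ ∘ₗ f)), ?_⟩
      rw [hnat2, LinearEquiv.apply_symm_apply, LinearMap.comp_assoc, hfg,
        LinearMap.comp_id]
  · intro H
    letI : Module Rᵐᵒᵖ E := Module.compHom E ((RingHom.id R).fromOpposite mul_comm)
    haveI : IsCentralScalar R E := ⟨fun r m => rfl⟩
    set B := TrivSqZeroExt R E with hB
    obtain ⟨t, ht⟩ := (H B).2 (TrivSqZeroExt.inrHom R E)
    obtain ⟨S, hS⟩ := TensorProduct.exists_finset t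
    have key : ∀ e : E, (∑ j ∈ S, j.1 e • j.2.snd) = e := by
      intro e
      have h1 : dualTensorHom R E B t e = TrivSqZeroExt.inr e := by
        rw [ht]; rfl
      rw [hS, map_sum] at h1
      have h2 := congrArg (TrivSqZeroExt.sndHom R E) h1
      simp only [map_sum, LinearMap.sum_apply, dualTensorHom_apply] at h2 ⊢
      exact h2
    let p : (S → R) →ₗ[R] E :=
      ∑ j : S, (LinearMap.proj j : (S → R) →ₗ[R] R).smulRight (j : Module.Dual R E × B).2.snd
    let s : E →ₗ[R] (S → R) := LinearMap.pi fun j => (j : Module.Dual R E × B).1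
    have hps : ∀ e, p (s e) = e := by
      intro e
      simp only [p, s, LinearMap.sum_apply, LinearMap.smulRight_apply, LinearMap.proj_apply,
        LinearMap.pi_apply]
      calc (∑ x : S, (x : Module.Dual R E × B).1 e • (x : Module.Dual R E × B).2.snd)
          = ∑ j ∈ S, j.1 e • j.2.snd :=
            Finset.sum_attach S fun j => j.1 e • j.2.snd
        _ = e := key e
    have hpsurj : Function.Surjective p := fun e => ⟨s e, hps e⟩
    exact ⟨Module.Finite.of_surjective p hpsurj,
      Module.Projective.of_split s p (LinearMap.ext hps)⟩
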